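/- arXiv:1510.09066 — 2 statements merged into one kernel-verified Lean document; each statement's English description precedes it below -/
import Mathlib

section
/- Let $\mathbf X$ be a real-valued L\'evy process on $[0,1]$ with $\mathbf X_0 = 0$, and let $q > 0$ and $f(x) = 1 - \exp(-|x|^q)$. If $\lim_{t \to 0} t^{-1} \mathbb E[f(\mathbf X_t)] = \infty$, then almost surely $\sup_{\mathcal D \subset [0,1]} \sum_{t_k \in \mathcal D} |\mathbf X_{t_{k+1}} - \mathbf X_{t_k}|^q = \infty$. -/
set_option maxHeartbeats 1000000


open MeasureTheory ProbabilityTheory Set Filter Topology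

/-- Let `X` be a real-valued Lévy process on `[0,1]` with `X₀ = 0`
(càdlàg, stationary independent increments), `q > 0` and `f(x) = 1 - exp(-|x|^q)`.
If `t⁻¹ 𝔼[f(X_t)] → ∞` as `t → 0⁺`, then almost surely
`sup_𝒟 ∑ |X_{t_{k+1}} - X_{t_k}|^q = ∞`. -/
theorem infinite_q_variation_of_generator_blowup {Ω : Type*} [MeasurableSpace Ω]
    (μ : Measure Ω) [IsProbabilityMeasure μ]
    (X : ℝ → Ω → ℝ) (hXmeas : ∀ t, Measurable (X t))
    (hX0 : ∀ᵐ ω ∂μ, X 0 ω = 0)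
    (hrc : ∀ᵐ ω ∂μ, ∀ t, ContinuousWithinAt (fun u => X u ω) (Ici t) t)
    (hindep : ∀ (n : ℕ) (t : ℕ → ℝ), Monotone t →
      iIndepFun
        (fun i : Fin n => fun ω => X (t (i.val + 1)) ω - X (t i.val) ω) μ)
    (hstat : ∀ s t : ℝ, 0 ≤ s → s ≤ t →
      Measure.map (fun ω => X t ω - X s ω) μ = Measure.map (fun ω => X (t - s) ω) μ)
    (q : ℝ) (hq : 0 < q)
    (hblow : Tendsto
      (fun t : ℝ => (∫ ω, (1 - Real.exp (-(|X t ω| ^ q))) ∂μ) / t)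
      (𝓝[>] (0 : ℝ)) atTop) :
    ∀ᵐ ω ∂μ, ∀ M : ℝ, ∃ (n : ℕ) (u : ℕ → ℝ), Monotone u ∧ u 0 = 0 ∧ u n = 1 ∧
      M < ∑ i ∈ Finset.range n, |X (u (i + 1)) ω - X (u i) ω| ^ q := by
  classical
  -- basic functions
  set h : ℝ → ℝ := fun x => |x| ^ q with hh
  have hhcont : Continuous h := continuous_abs.rpow_const (fun x => Or.inr hq.le)
  have hhnonneg : ∀ x, 0 ≤ h x := fun x => Real.rpow_nonneg (abs_nonneg x) q
  set g : ℝ → ℝ := fun x => Real.exp (-(h x)) with hgdef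
  have hgcont : Continuous g := (hhcont.neg).rexp
  -- partial sums of q-variation along dyadic-like partitions
  set T : ℕ → Ω → ℝ := fun n ω =>
    ∑ i ∈ Finset.range n, |X ((↑(i + 1)) / (n : ℝ)) ω - X ((↑i) / (n : ℝ)) ω| ^ q with hT
  have hTmeas : ∀ n, Measurable (T n) := fun n =>
    Finset.measurable_sum _ fun i _ =>
      hhcont.measurable.comp ((hXmeas _).sub (hXmeas _))
  have hTnonneg : ∀ n ω, 0 ≤ T n ω := fun n ω =>
    Finset.sum_nonneg fun i _ => Real.rpow_nonneg (abs_nonneg _) q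
  have hInt : ∀ n, Integrable (fun ω => Real.exp (-(T n ω))) μ := by
    intro n
    refine (integrable_const (1 : ℝ)).mono' ((hTmeas n).neg.exp.aestronglyMeasurable)
      (ae_of_all _ fun ω => ?_)
    rw [Real.norm_eq_abs, abs_of_pos (Real.exp_pos _)]
    calc Real.exp (-(T n ω)) ≤ Real.exp 0 :=
          Real.exp_le_exp.2 (neg_nonpos.2 (hTnonneg n ω))
      _ = 1 := Real.exp_zero
  have hgXint : ∀ s : ℝ, Integrable (fun ω => g (X s ω)) μ := by
    intro s
    refine (integrable_const (1 : ℝ)).mono'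
      ((hgcont.measurable.comp (hXmeas s)).aestronglyMeasurable) (ae_of_all _ fun ω => ?_)
    rw [Real.norm_eq_abs, abs_of_pos (Real.exp_pos _)]
    calc Real.exp (-(h (X s ω))) ≤ Real.exp 0 :=
          Real.exp_le_exp.2 (neg_nonpos.2 (hhnonneg _))
      _ = 1 := Real.exp_zero
  -- the key product identity
  have key : ∀ n : ℕ, 1 ≤ n →
      ∫ ω, Real.exp (-(T n ω)) ∂μ = (∫ ω, g (X (1 / (n : ℝ)) ω) ∂μ) ^ n := by
    intro n hn
    have hn0 : (n : ℝ) ≠ 0 := Nat.cast_ne_zero.2 (by omega)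
    have hnpos : (0 : ℝ) < n := by positivity
    set t : ℕ → ℝ := fun k => (k : ℝ) / n with ht
    have hmono : Monotone t := fun a b hab => by
      apply div_le_div_of_nonneg_right ?_ hnpos.le
      exact_mod_cast hab
    have hind := hindep n t hmono
    set Δ : Fin n → Ω → ℝ := fun i ω => X (t (i.val + 1)) ω - X (t i.val) ω with hΔ
    have hΔmeas : ∀ i, Measurable (Δ i) := fun i => (hXmeas _).sub (hXmeas _)
    have hYind : iIndepFun
        (fun i => fun ω => h (Δ i ω)) μ :=
      hind.comp (fun _ => h) (fun _ => hhcont.measurable)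
    have hYmeas : ∀ i : Fin n, Measurable fun ω => h (Δ i ω) := fun i =>
      hhcont.measurable.comp (hΔmeas i)
    have hmgf := iIndepFun.mgf_sum (t := -1) hYind hYmeas Finset.univ
    have hL : mgf (∑ i : Fin n, fun ω => h (Δ i ω)) μ (-1)
        = ∫ ω, Real.exp (-(T n ω)) ∂μ := by
      rw [show mgf (∑ i : Fin n, fun ω => h (Δ i ω)) μ (-1)
          = ∫ ω, Real.exp (-1 * (∑ i : Fin n, fun ω' => h (Δ i ω')) ω) ∂μ from rfl]
      refine integral_congr_ae (ae_of_all _ fun ω => ?_)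
      simp only [neg_one_mul, Finset.sum_apply]
      congr 1
      congr 1
      rw [hT]
      exact (Fin.sum_univ_eq_sum_range
        (fun i => h (X ((↑(i+1))/(n:ℝ)) ω - X ((↑i)/(n:ℝ)) ω)) n)
    have hstat_i : ∀ i : Fin n,
        mgf (fun ω => h (Δ i ω)) μ (-1) = ∫ ω, g (X (1 / (n : ℝ)) ω) ∂μ := by
      intro i
      have hmgfi : mgf (fun ω => h (Δ i ω)) μ (-1) = ∫ ω, g (Δ i ω) ∂μ := by
        rw [show mgf (fun ω => h (Δ i ω)) μ (-1)
            = ∫ ω, Real.exp (-1 * h (Δ i ω)) ∂μ from rfl]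
        refine integral_congr_ae (ae_of_all _ fun ω => ?_)
        simp only [neg_one_mul]
        rfl
      rw [hmgfi]
      have h1 : (0 : ℝ) ≤ t i.val := by positivity
      have h2 : t i.val ≤ t (i.val + 1) := hmono (Nat.le_succ _)
      have hmap := hstat (t i.val) (t (i.val + 1)) h1 h2
      have hts : t (i.val + 1) - t i.val = 1 / (n : ℝ) := by
        simp only [ht]
        field_simp
        push_cast; ring
      calc ∫ ω, g (Δ i ω) ∂μ
          = ∫ x, g x ∂(Measure.map (fun ω => X (t (i.val + 1)) ω - X (t i.val) ω) μ) :=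
            (integral_map ((hΔmeas i).aemeasurable) hgcont.aestronglyMeasurable).symm
        _ = ∫ x, g x ∂(Measure.map (fun ω => X (t (i.val + 1) - t i.val) ω) μ) := by
            rw [hmap]
        _ = ∫ x, g x ∂(Measure.map (fun ω => X (1 / (n : ℝ)) ω) μ) := by rw [hts]
        _ = ∫ ω, g (X (1 / (n : ℝ)) ω) ∂μ :=
            integral_map ((hXmeas _).aemeasurable) hgcont.aestronglyMeasurable
    rw [hL] at hmgf
    rw [hmgf]
    rw [Finset.prod_congr rfl (fun i _ => hstat_i i), Finset.prod_const, Finset.card_univ,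
      Fintype.card_fin]
  -- expectations
  set a : ℕ → ℝ := fun n => ∫ ω, (1 - Real.exp (-(|X (1 / (n : ℝ)) ω| ^ q))) ∂μ with ha
  have hc : ∀ n : ℕ, ∫ ω, g (X (1 / (n : ℝ)) ω) ∂μ = 1 - a n := by
    intro n
    have : a n = 1 - ∫ ω, g (X (1 / (n : ℝ)) ω) ∂μ := by
      rw [show a n = ∫ ω, ((1 : ℝ) - g (X (1 / (n : ℝ)) ω)) ∂μ from rfl,
        integral_sub (integrable_const 1) (hgXint _)]
      simp
    linarith
  have hcnonneg : ∀ n : ℕ, 0 ≤ 1 - a n := by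
    intro n
    rw [← hc n]
    exact integral_nonneg fun ω => (Real.exp_pos _).le
  -- blow-up of n * a n
  have hb : Tendsto (fun n : ℕ => (n : ℝ) * a n) atTop atTop := by
    have h1 : Tendsto (fun n : ℕ => 1 / (n : ℝ)) atTop (𝓝[>] 0) := by
      apply tendsto_nhdsWithin_of_tendsto_nhds_of_eventually_within _
        tendsto_one_div_atTop_nhds_zero_nat
      filter_upwards [eventually_gt_atTop 0] with n hn
      have : (0:ℝ) < n := by exact_mod_cast hn
      exact one_div_pos.2 this
    have h2 := hblow.comp h1
    refine h2.congr fun n => ?_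
    show a n / (1 / (n : ℝ)) = (n : ℝ) * a n
    rw [one_div, div_eq_mul_inv, inv_inv, mul_comm]
  -- the integrals tend to zero
  have hI0 : Tendsto (fun n => ∫ ω, Real.exp (-(T n ω)) ∂μ) atTop (𝓝 0) := by
    have hexp : Tendsto (fun n : ℕ => Real.exp (-((n : ℝ) * a n))) atTop (𝓝 0) :=
      Real.tendsto_exp_atBot.comp (tendsto_neg_atBot_iff.2 hb)
    refine squeeze_zero'
      (Eventually.of_forall fun n => integral_nonneg fun ω => (Real.exp_pos _).le) ?_ hexp
    filter_upwards [eventually_ge_atTop 1] with n hn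
    rw [key n hn, hc n]
    calc (1 - a n) ^ n ≤ Real.exp (-(a n)) ^ n := by
          apply pow_le_pow_left₀ (hcnonneg n)
          linarith [Real.add_one_le_exp (-(a n))]
      _ = Real.exp (-((n : ℝ) * a n)) := by
          rw [← Real.exp_nat_mul]
          ring_nf
  -- the bad sets are null
  have hA : ∀ m : ℕ, μ {ω | ∀ n, T n ω ≤ (m : ℝ)} = 0 := by
    intro m
    set A := {ω | ∀ n, T n ω ≤ (m : ℝ)} with hAdef
    have hle : ∀ n, (μ A).toReal ≤ Real.exp (m : ℝ) * ∫ ω, Real.exp (-(T n ω)) ∂μ := by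
      intro n
      have hsub : A ⊆ {x | Real.exp (-(m : ℝ)) ≤ Real.exp (-(T n x))} := fun ω hω =>
        Real.exp_le_exp.2 (neg_le_neg (hω n))
      have hmarkov := mul_meas_ge_le_integral_of_nonneg
        (ae_of_all μ fun ω => (Real.exp_pos (-(T n ω))).le) (hInt n) (Real.exp (-(m : ℝ)))
      have h2 : (μ A).toReal ≤ (μ {x | Real.exp (-(m : ℝ)) ≤ Real.exp (-(T n x))}).toReal :=
        ENNReal.toReal_mono (measure_ne_top μ _) (measure_mono hsub)
      have hpos : 0 < Real.exp (-(m : ℝ)) := Real.exp_pos _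
      have h3 : (μ {x | Real.exp (-(m : ℝ)) ≤ Real.exp (-(T n x))}).toReal
          ≤ (∫ ω, Real.exp (-(T n ω)) ∂μ) / Real.exp (-(m : ℝ)) :=
        (le_div_iff₀' hpos).2 hmarkov
      have h4 : (∫ ω, Real.exp (-(T n ω)) ∂μ) / Real.exp (-(m : ℝ))
          = Real.exp (m : ℝ) * ∫ ω, Real.exp (-(T n ω)) ∂μ := by
        rw [Real.exp_neg, div_eq_mul_inv, inv_inv, mul_comm]
      linarith
    have hlim : Tendsto (fun n => Real.exp (m : ℝ) * ∫ ω, Real.exp (-(T n ω)) ∂μ)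
        atTop (𝓝 0) := by
      simpa using hI0.const_mul (Real.exp (m : ℝ))
    have h0 : (μ A).toReal ≤ 0 := ge_of_tendsto' hlim hle
    have h5 : (μ A).toReal = 0 := le_antisymm h0 ENNReal.toReal_nonneg
    exact ((ENNReal.toReal_eq_zero_iff _).1 h5).resolve_right (measure_ne_top μ _)
  have hae : ∀ᵐ ω ∂μ, ∀ m : ℕ, ∃ n, (m : ℝ) < T n ω := by
    rw [ae_all_iff]
    intro m
    rw [ae_iff]
    simp only [not_exists, not_lt]
    exact hA m
  -- conclusion
  filter_upwards [hae] with ω hω M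
  obtain ⟨n, hn⟩ := hω ⌈M⌉₊
  have hM : M ≤ (⌈M⌉₊ : ℝ) := Nat.le_ceil M
  have hn0 : n ≠ 0 := by
    rintro rfl
    simp only [hT, Finset.range_zero, Finset.sum_empty] at hn
    exact absurd hn (not_lt.2 (Nat.cast_nonneg _))
  have hnpos : (0 : ℝ) < n := by
    have : 0 < n := Nat.pos_of_ne_zero hn0
    exact_mod_cast this
  refine ⟨n, fun i => (i : ℝ) / n, ?_, ?_, ?_, ?_⟩
  · intro x y hxy
    apply div_le_div_of_nonneg_right ?_ hnpos.le
    exact_mod_cast hxy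
  · simp
  · exact div_self hnpos.ne'
  · rw [hT] at hn
    exact lt_of_le_of_lt hM hn
end

section
/- Let $G$ be a Lie group, $\Pi$ a L\'evy measure on $G$, and $X_{n1}$, $n \geq 1$, an infinitesimal family of $G$-valued random variables such that $\lim_{n\to\infty} n\,\mathbb E[f(X_{n1})] = \Pi(f)$ for every bounded continuous $f : G \to \mathbb R$ vanishing on a neighbourhood of the identity. Let $\theta : G \to [0,\infty)$ be a continuous bounded function with $\theta(1_G) = 0$ such that $\sup_{n\geq 1} n\,\mathbb E[\theta(X_{n1})] < \infty$. Then $\int_G \theta(x) \Pi(dx) \leq \limsup_{n\to\infty} n\,\mathbb E[\theta(X_{n1})] < \infty$. -/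
open MeasureTheory Filter Topology
open scoped ENNReal

/-- Let `Pim` be a Lévy measure on a (metrizable) group `G` with identity
`e` (σ-finite, no mass at `e`, finite mass outside every neighbourhood of `e`), and let
`X n` be an infinitesimal family with `n 𝔼[f(X n)] → Pim(f)` for every bounded continuous
`f` vanishing near `e`.  If `θ` is a continuous bounded nonnegative function with
`θ(e) = 0` and `sup_n n 𝔼[θ(X n)] < ∞`, then
`∫ θ dPim ≤ limsup_n n 𝔼[θ(X n)] < ∞`. -/
theorem levy_measure_scaling_integral_bound {G Ω : Type*} [MetricSpace G]
    [MeasurableSpace G] [BorelSpace G] [MeasurableSpace Ω]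
    (μ : Measure Ω) [IsProbabilityMeasure μ]
    (e : G) (Pim : Measure G) [SigmaFinite Pim]
    (hPe : Pim {e} = 0)
    (hPfin : ∀ U ∈ 𝓝 e, Pim Uᶜ < ⊤)
    (X : ℕ → Ω → G) (hXmeas : ∀ n, Measurable (X n))
    (hinfin : ∀ U ∈ 𝓝 e, Tendsto (fun n => μ {ω | X n ω ∉ U}) atTop (𝓝 0))
    (hconv : ∀ f : G → ℝ, Continuous f → (∃ M : ℝ, ∀ x, |f x| ≤ M) →
      (∃ U ∈ 𝓝 e, ∀ x ∈ U, f x = 0) →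
      Tendsto (fun n : ℕ => (n : ℝ) * ∫ ω, f (X n ω) ∂μ) atTop (𝓝 (∫ x, f x ∂Pim)))
    (θ : G → ℝ) (hθcont : Continuous θ) (hθbdd : ∃ M : ℝ, ∀ x, θ x ≤ M)
    (hθ0 : θ e = 0) (hθnonneg : ∀ x, 0 ≤ θ x)
    (hθscale : BddAbove (Set.range fun n : ℕ => (n : ℝ) * ∫ ω, θ (X n ω) ∂μ)) :
    ∫⁻ x, ENNReal.ofReal (θ x) ∂Pim ≤
        limsup (fun n : ℕ => ENNReal.ofReal ((n : ℝ) * ∫ ω, θ (X n ω) ∂μ)) atTop ∧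
      limsup (fun n : ℕ => ENNReal.ofReal ((n : ℝ) * ∫ ω, θ (X n ω) ∂μ)) atTop < ⊤ := by
  obtain ⟨M, hM⟩ := hθbdd
  obtain ⟨C, hC⟩ := hθscale
  set L := limsup (fun n : ℕ => ENNReal.ofReal ((n : ℝ) * ∫ ω, θ (X n ω) ∂μ)) atTop with hLdef
  have hLtop : L < ⊤ := by
    have hle : ∀ n : ℕ, ENNReal.ofReal ((n : ℝ) * ∫ ω, θ (X n ω) ∂μ) ≤ ENNReal.ofReal C :=
      fun n => ENNReal.ofReal_le_ofReal (hC ⟨n, rfl⟩)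
    exact lt_of_le_of_lt (limsup_le_of_le (h := Eventually.of_forall hle)) ENNReal.ofReal_lt_top
  refine ⟨?_, hLtop⟩
  -- cut-off functions
  set φ : ℕ → G → ℝ := fun k x => min 1 (max 0 ((k + 1 : ℝ) * dist x e - 1)) with hφdef
  have hφcont : ∀ k, Continuous (φ k) := fun k =>
    continuous_const.min (continuous_const.max
      (((continuous_const.mul (continuous_id.dist continuous_const)).sub continuous_const)))
  have hφ0 : ∀ k x, 0 ≤ φ k x := fun k x => le_min zero_le_one (le_max_left _ _)
  have hφ1 : ∀ k x, φ k x ≤ 1 := fun k x => min_le_left _ _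
  have hφmono : ∀ x, Monotone fun k => φ k x := by
    intro x k k' hk
    refine min_le_min le_rfl (max_le_max le_rfl (sub_le_sub_right ?_ _))
    exact mul_le_mul_of_nonneg_right (by exact_mod_cast Nat.add_le_add_right hk 1)
      dist_nonneg
  set g : ℕ → G → ℝ := fun k x => θ x * φ k x with hgdef
  have hgcont : ∀ k, Continuous (g k) := fun k => hθcont.mul (hφcont k)
  have hg_nonneg : ∀ k x, 0 ≤ g k x := fun k x => mul_nonneg (hθnonneg x) (hφ0 k x)
  have hg_le_θ : ∀ k x, g k x ≤ θ x := fun k x => by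
    have := mul_le_mul_of_nonneg_left (hφ1 k x) (hθnonneg x)
    simpa using this
  have hg_bdd : ∀ k x, |g k x| ≤ M := fun k x => by
    rw [abs_of_nonneg (hg_nonneg k x)]
    exact (hg_le_θ k x).trans (hM x)
  have hMnonneg : 0 ≤ M := (hθnonneg e).trans (hM e)
  -- g k vanishes on a ball around e
  have hr : ∀ k : ℕ, (0 : ℝ) < 1 / (k + 1) := fun k => by positivity
  have hg_zero : ∀ k : ℕ, ∀ x ∈ Metric.ball e (1 / ((k : ℝ) + 1)), g k x = 0 := by
    intro k x hx
    have hxd : dist x e < 1 / ((k : ℝ) + 1) := by simpa [Metric.mem_ball] using hx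
    have h1 : (k + 1 : ℝ) * dist x e - 1 < 0 := by
      have hk1 : (0 : ℝ) < (k : ℝ) + 1 := by positivity
      have : ((k : ℝ) + 1) * dist x e < 1 := by
        calc ((k : ℝ) + 1) * dist x e < ((k : ℝ) + 1) * (1 / ((k : ℝ) + 1)) :=
              (mul_lt_mul_iff_right₀ hk1).2 hxd
          _ = 1 := by field_simp
      linarith
    have : φ k x = 0 := by
      simp only [hφdef]
      rw [max_eq_left h1.le, min_eq_right zero_le_one]
    simp [hgdef, this]
  have hball : ∀ k : ℕ, Metric.ball e (1 / ((k : ℝ) + 1)) ∈ 𝓝 e :=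
    fun k => Metric.ball_mem_nhds e (hr k)
  -- integrability of g k ∘ X n and θ ∘ X n
  have hint_θ : ∀ n, Integrable (fun ω => θ (X n ω)) μ := by
    intro n
    refine Integrable.mono' (integrable_const M)
      ((hθcont.measurable.comp (hXmeas n)).aestronglyMeasurable) (Eventually.of_forall fun ω => ?_)
    rw [Real.norm_eq_abs, abs_of_nonneg (hθnonneg _)]
    exact hM _
  have hint_g : ∀ k n, Integrable (fun ω => g k (X n ω)) μ := by
    intro k n
    refine Integrable.mono' (integrable_const M)
      (((hgcont k).measurable.comp (hXmeas n)).aestronglyMeasurable)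
      (Eventually.of_forall fun ω => ?_)
    rw [Real.norm_eq_abs]
    exact hg_bdd k _
  -- expectations compare
  have hEle : ∀ k n : ℕ, (n : ℝ) * ∫ ω, g k (X n ω) ∂μ ≤ (n : ℝ) * ∫ ω, θ (X n ω) ∂μ := by
    intro k n
    exact mul_le_mul_of_nonneg_left
      (integral_mono (hint_g k n) (hint_θ n) fun ω => hg_le_θ k _) (Nat.cast_nonneg n)
  -- each ∫ g k dPim is bounded by L
  have hkey : ∀ k, ENNReal.ofReal (∫ x, g k x ∂Pim) ≤ L := by
    intro k
    have htend := hconv (g k) (hgcont k) ⟨M, hg_bdd k⟩ ⟨_, hball k, hg_zero k⟩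
    have htend' : Tendsto (fun n : ℕ => ENNReal.ofReal ((n : ℝ) * ∫ ω, g k (X n ω) ∂μ)) atTop
        (𝓝 (ENNReal.ofReal (∫ x, g k x ∂Pim))) :=
      (ENNReal.continuous_ofReal.tendsto _).comp htend
    calc ENNReal.ofReal (∫ x, g k x ∂Pim)
        = limsup (fun n : ℕ => ENNReal.ofReal ((n : ℝ) * ∫ ω, g k (X n ω) ∂μ)) atTop :=
          htend'.limsup_eq.symm
      _ ≤ L := limsup_le_limsup (Eventually.of_forall fun n =>
          ENNReal.ofReal_le_ofReal (hEle k n))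
  -- g k is Pim-integrable
  have hint_gP : ∀ k, Integrable (g k) Pim := by
    intro k
    have hS : MeasurableSet (Metric.ball e (1 / ((k : ℝ) + 1)))ᶜ :=
      (Metric.isOpen_ball.measurableSet).compl
    have hfin : Pim (Metric.ball e (1 / ((k : ℝ) + 1)))ᶜ < ⊤ := hPfin _ (hball k)
    have hon : IntegrableOn (g k) (Metric.ball e (1 / ((k : ℝ) + 1)))ᶜ Pim :=
      Measure.integrableOn_of_bounded hfin.ne
        ((hgcont k).measurable.aestronglyMeasurable)
        (Eventually.of_forall fun x => by rw [Real.norm_eq_abs]; exact hg_bdd k x)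
    have hInd : Integrable ((Metric.ball e (1 / ((k : ℝ) + 1)))ᶜ.indicator (g k)) Pim :=
      hon.integrable_indicator hS
    refine hInd.congr (Eventually.of_forall fun x => ?_)
    by_cases hx : x ∈ Metric.ball e (1 / ((k : ℝ) + 1))
    · rw [Set.indicator_of_notMem (Set.notMem_compl_iff.2 hx), hg_zero k x hx]
    · rw [Set.indicator_of_mem (Set.mem_compl hx)]
  have hlint_g : ∀ k, ∫⁻ x, ENNReal.ofReal (g k x) ∂Pim = ENNReal.ofReal (∫ x, g k x ∂Pim) :=
    fun k => (ofReal_integral_eq_lintegral_ofReal (hint_gP k)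
      (Eventually.of_forall (hg_nonneg k))).symm
  -- pointwise supremum
  have hsup : ∀ x, (⨆ k, ENNReal.ofReal (g k x)) = ENNReal.ofReal (θ x) := by
    intro x
    refine le_antisymm (iSup_le fun k => ENNReal.ofReal_le_ofReal (hg_le_θ k x)) ?_
    by_cases hx : x = e
    · simp [hx, hθ0]
    · have hd : 0 < dist x e := dist_pos.2 hx
      obtain ⟨k, hk⟩ := exists_nat_ge (2 / dist x e)
      have h2 : (2 : ℝ) ≤ (k + 1 : ℝ) * dist x e := by
        have : (2 : ℝ) / dist x e * dist x e ≤ (k : ℝ) * dist x e :=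
          mul_le_mul_of_nonneg_right hk dist_nonneg
        rw [div_mul_cancel₀ _ hd.ne'] at this
        nlinarith
      have hφk : φ k x = 1 := by
        have h1 : (1 : ℝ) ≤ (k + 1 : ℝ) * dist x e - 1 := by linarith
        simp only [hφdef]
        rw [max_eq_right (by linarith : (0:ℝ) ≤ (k + 1 : ℝ) * dist x e - 1),
          min_eq_left h1]
      have : g k x = θ x := by simp [hgdef, hφk]
      calc ENNReal.ofReal (θ x) = ENNReal.ofReal (g k x) := by rw [this]
        _ ≤ ⨆ k, ENNReal.ofReal (g k x) := le_iSup (fun k => ENNReal.ofReal (g k x)) k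
  -- monotone convergence
  have hmeas : ∀ k, Measurable fun x => ENNReal.ofReal (g k x) :=
    fun k => ENNReal.measurable_ofReal.comp (hgcont k).measurable
  have hmono : Monotone fun k => fun x => ENNReal.ofReal (g k x) := by
    intro k k' hk
    exact fun x => ENNReal.ofReal_le_ofReal
      (mul_le_mul_of_nonneg_left (hφmono x hk) (hθnonneg x))
  calc ∫⁻ x, ENNReal.ofReal (θ x) ∂Pim
      = ∫⁻ x, ⨆ k, ENNReal.ofReal (g k x) ∂Pim := by
        refine lintegral_congr fun x => (hsup x).symm
    _ = ⨆ k, ∫⁻ x, ENNReal.ofReal (g k x) ∂Pim := lintegral_iSup hmeas hmono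
    _ ≤ L := iSup_le fun k => (hlint_g k) ▸ hkey k
end
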